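/- Curry's fixed point combinator Y0 and Turing's fixed point combinator Y1 are not β-convertible: Y0 ≠β Y1. -/

import Mathlib

/-- Untyped λ-terms in de Bruijn notation. -/
inductive Lam : Type
  | var : Nat → Lam
  | app : Lam → Lam → Lam
  | lam : Lam → Lam
  deriving DecidableEq

namespace Lam

/-- Lift (shift) free variables ≥ `d` by one. -/
def lift (d : Nat) : Lam → Lam
  | var n => if n < d then var n else var (n + 1)
  | app s t => app (lift d s) (lift d t)
  | lam t => lam (lift (d + 1) t)

/-- Capture-avoiding substitution of `u` for the variable with index `k`. -/
def subst (k : Nat) (u : Lam) : Lam → Lam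
  | var n => if n = k then u else if k < n then var (n - 1) else var n
  | app s t => app (subst k u s) (subst k u t)
  | lam t => lam (subst (k + 1) (lift 0 u) t)

/-- One-step β-reduction `→β` (compatible closure of the β-rule). -/
inductive Step : Lam → Lam → Prop
  | beta (t u : Lam) : Step (app (lam t) u) (subst 0 u t)
  | appL {s s' : Lam} (t : Lam) : Step s s' → Step (app s t) (app s' t)
  | appR (s : Lam) {t t' : Lam} : Step t t' → Step (app s t) (app s t')
  | lam {t t' : Lam} : Step t t' → Step (lam t) (lam t')

/-- Many-step β-reduction `↠β`. -/
def Red : Lam → Lam → Prop := Relation.ReflTransGen Step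

/-- β-convertibility `=β`. -/
def Conv : Lam → Lam → Prop := Relation.EqvGen Step

/-- `Y` is a fixed point combinator: `Y x =β x (Y x)` for a fresh variable `x`. -/
def isFPC (Y : Lam) : Prop :=
  Conv (app (lift 0 Y) (var 0)) (app (var 0) (app (lift 0 Y) (var 0)))

/-- `M P^n`: `M` applied to `n` copies of `P`. -/
def appIter (M P : Lam) : Nat → Lam
  | 0 => M
  | n + 1 => appIter (app M P) P n

/-- `I = λx.x` -/
def K_I : Lam := lam (var 0)

/-- `S = λxyz.xz(yz)` -/
def K_S : Lam := lam (lam (lam (app (app (var 2) (var 0)) (app (var 1) (var 0)))))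

/-- `B = λxyz.x(yz)` -/
def K_B : Lam := lam (lam (lam (app (var 2) (app (var 1) (var 0)))))

/-- `δ = λab.b(ab)` -/
def K_delta : Lam := lam (lam (app (var 0) (app (var 1) (var 0))))

/-- `ω_f = λx.f(xx)` (with `f` the variable bound just outside). -/
def K_omega : Lam := lam (app (var 1) (app (var 0) (var 0)))

/-- Curry's fpc `Y0 = λf.ω_f ω_f`. -/
def Y0 : Lam := lam (app K_omega K_omega)

/-- `η = λxf.f(xxf)` -/
def K_eta : Lam := lam (lam (app (var 0) (app (app (var 1) (var 1)) (var 0))))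

/-- Turing's fpc `Y1 = ηη`. -/
def Y1 : Lam := app K_eta K_eta

/-- One head reduction step: contraction of the head redex. -/
inductive Head : Lam → Lam → Prop
  | beta (t u : Lam) : Head (app (lam t) u) (subst 0 u t)
  | app {s s' : Lam} (t : Lam) : (∀ u, s ≠ lam u) → Head s s' → Head (app s t) (app s' t)
  | lam {t t' : Lam} : Head t t' → Head (lam t) (lam t')

/-- Exactly `k` head reduction steps. -/
def HeadN : Nat → Lam → Lam → Prop
  | 0, s, t => s = t
  | k + 1, s, t => ∃ u, Head s u ∧ HeadN k u t

/-- Exactly `k` β-reduction steps. -/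
def StepN : Nat → Lam → Lam → Prop
  | 0, s, t => s = t
  | k + 1, s, t => ∃ u, Step s u ∧ StepN k u t

/-- Curry's fpc `Y0` and Turing's fpc `Y1` are not β-convertible. -/
theorem lift_lift (t : Lam) : ∀ i j, i ≤ j →
    lift i (lift j t) = lift (j + 1) (lift i t) := by
  induction t with
  | var n => intro i j h; simp only [lift, subst]; split_ifs <;> (try simp only [lift, subst]) <;> (try split_ifs) <;> first | rfl | omega | (congr 1; omega)
  | app s t ihs iht => intro i j h; simp [lift, ihs _ _ h, iht _ _ h]
  | lam t ih => intro i j h; simp [lift, ih (i+1) (j+1) (by omega)]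

theorem lift_subst_low (t : Lam) : ∀ d k (u : Lam), d ≤ k →
    lift d (subst k u t) = subst (k + 1) (lift d u) (lift d t) := by
  induction t with
  | var n =>
      intro d k u h; simp only [lift, subst]; split_ifs <;> (try simp only [lift, subst]) <;> (try split_ifs) <;> first | rfl | omega | (congr 1; omega)
  | app s t ihs iht => intro d k u h; simp [lift, subst, ihs _ _ _ h, iht _ _ _ h]
  | lam t ih =>
      intro d k u h
      simp only [lift, subst, ih (d+1) (k+1) (lift 0 u) (by omega)]
      rw [lift_lift u 0 d (by omega)]

theorem lift_subst_high (t : Lam) : ∀ d k (u : Lam), k ≤ d →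
    lift d (subst k u t) = subst k (lift d u) (lift (d + 1) t) := by
  induction t with
  | var n =>
      intro d k u h; simp only [lift, subst]; split_ifs <;> (try simp only [lift, subst]) <;> (try split_ifs) <;> first | rfl | omega | (congr 1; omega)
  | app s t ihs iht => intro d k u h; simp [lift, subst, ihs _ _ _ h, iht _ _ _ h]
  | lam t ih =>
      intro d k u h
      simp only [lift, subst, ih (d+1) (k+1) (lift 0 u) (by omega)]
      rw [lift_lift u 0 d (by omega)]

theorem subst_lift_cancel (t : Lam) : ∀ k (u : Lam), subst k u (lift k t) = t := by
  induction t with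
  | var n => intro k u; simp only [lift, subst]; split_ifs <;> (try simp only [lift, subst]) <;> (try split_ifs) <;> first | rfl | omega | (congr 1; omega)
  | app s t ihs iht => intro k u; simp [lift, subst, ihs, iht]
  | lam t ih => intro k u; simp [lift, subst, ih]

theorem subst_subst (t : Lam) : ∀ i j (u v : Lam), i ≤ j →
    subst j v (subst i u t) = subst i (subst j v u) (subst (j + 1) (lift i v) t) := by
  induction t with
  | var n =>
      intro i j u v h; simp only [lift, subst]; split_ifs <;> (try simp only [lift, subst, subst_lift_cancel]) <;> (try split_ifs) <;> first | rfl | omega | (congr 1; omega)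
  | app s t ihs iht => intro i j u v h; simp [subst, ihs _ _ _ _ h, iht _ _ _ _ h]
  | lam t ih =>
      intro i j u v h
      simp only [subst, ih (i+1) (j+1) (lift 0 u) (lift 0 v) (by omega)]
      rw [lift_subst_low u 0 j v (by omega), lift_lift v 0 i (by omega)]


inductive Par : Lam → Lam → Prop
  | var (n : Nat) : Par (var n) (var n)
  | lam {t t'} : Par t t' → Par (lam t) (lam t')
  | app {s s' t t'} : Par s s' → Par t t' → Par (app s t) (app s' t')
  | beta {t t' u u'} : Par t t' → Par u u' → Par (app (lam t) u) (subst 0 u' t')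

theorem Par.refl : ∀ t : Lam, Par t t
  | .var n => Par.var n
  | .app s t => Par.app (Par.refl s) (Par.refl t)
  | .lam t => Par.lam (Par.refl t)

theorem Step.par {s t : Lam} (h : Step s t) : Par s t := by
  induction h with
  | beta t u => exact Par.beta (Par.refl t) (Par.refl u)
  | appL t _ ih => exact Par.app ih (Par.refl t)
  | appR s _ ih => exact Par.app (Par.refl s) ih
  | lam _ ih => exact Par.lam ih

theorem red_appL {s s' : Lam} (t : Lam) (h : Red s s') : Red (app s t) (app s' t) := by
  induction h with
  | refl => exact .refl
  | tail _ h2 ih => exact ih.tail (Step.appL t h2)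

theorem red_appR (s : Lam) {t t' : Lam} (h : Red t t') : Red (app s t) (app s t') := by
  induction h with
  | refl => exact .refl
  | tail _ h2 ih => exact ih.tail (Step.appR s h2)

theorem red_lam {t t' : Lam} (h : Red t t') : Red (lam t) (lam t') := by
  induction h with
  | refl => exact .refl
  | tail _ h2 ih => exact ih.tail (Step.lam h2)

theorem Par.red {s t : Lam} (h : Par s t) : Red s t := by
  induction h with
  | var n => exact .refl
  | lam _ ih => exact red_lam ih
  | app _ _ ih1 ih2 => exact ((red_appL _ ih1).trans (red_appR _ ih2))
  | beta _ _ ih1 ih2 =>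
      exact ((red_appL _ (red_lam ih1)).trans (red_appR _ ih2)).tail (Step.beta _ _)

theorem Par.lift_par {t t' : Lam} (h : Par t t') : ∀ d, Par (lift d t) (lift d t') := by
  induction h with
  | var n => intro d; simp only [lift]; split_ifs <;> exact Par.refl _
  | lam _ ih => intro d; exact Par.lam (ih (d+1))
  | app _ _ ih1 ih2 => intro d; exact Par.app (ih1 d) (ih2 d)
  | beta _ _ ih1 ih2 =>
      intro d
      have := Par.beta (ih1 (d+1)) (ih2 d)
      simpa [lift, lift_subst_high _ d 0 _ (Nat.zero_le d)] using this

theorem Par.subst_par {t t' : Lam} (ht : Par t t') :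
    ∀ {u u' : Lam} (k : Nat), Par u u' → Par (subst k u t) (subst k u' t') := by
  induction ht with
  | var n =>
      intro u u' k hu; simp only [subst]
      split_ifs <;> first | exact hu | exact Par.refl _
  | lam _ ih => intro u u' k hu; exact Par.lam (ih (k+1) (hu.lift_par 0))
  | app _ _ ih1 ih2 => intro u u' k hu; exact Par.app (ih1 k hu) (ih2 k hu)
  | beta _ _ ih1 ih2 =>
      intro u u' k hu
      have := Par.beta (ih1 (k+1) (hu.lift_par 0)) (ih2 k hu)
      simpa [subst, subst_subst _ 0 k _ _ (Nat.zero_le k)] using this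

/-- complete development -/
def cd : Lam → Lam
  | .var n => .var n
  | .lam t => .lam (cd t)
  | .app (.lam t) u => subst 0 (cd u) (cd t)
  | .app (.var n) u => .app (.var n) (cd u)
  | .app (.app a b) u => .app (cd (.app a b)) (cd u)

theorem par_lam_inv {a s' : Lam} (h : Par (lam a) s') : ∃ a', s' = lam a' ∧ Par a a' := by
  cases h with
  | lam h => exact ⟨_, rfl, h⟩

theorem Par.cd_par {s t : Lam} (h : Par s t) : Par t (cd s) := by
  induction h with
  | var n => exact Par.var n
  | lam _ ih => exact Par.lam ih
  | app hs ht ih1 ih2 =>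
      rename_i s s' u u'
      cases s with
      | var n => cases hs; exact Par.app ih1 ih2
      | app a b => exact Par.app ih1 ih2
      | lam a =>
          obtain ⟨a', rfl, ha⟩ := par_lam_inv hs
          obtain ⟨c, hc, hac⟩ := par_lam_inv ih1
          cases hc
          exact Par.beta hac ih2
  | beta _ _ ih1 ih2 => exact Par.subst_par ih1 0 ih2

theorem par_diamond {s t u : Lam} (h1 : Par s t) (h2 : Par s u) :
    ∃ d, Par t d ∧ Par u d := ⟨cd s, h1.cd_par, h2.cd_par⟩

theorem conv_join {s t : Lam} (h : Conv s t) : ∃ d, Red s d ∧ Red t d := by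
  have hmono : Relation.EqvGen Par s t := Relation.EqvGen.mono (fun _ _ h => Step.par h) s t h
  have hdiam : ∀ a b c, Par a b → Par a c →
      ∃ d, Relation.ReflGen Par b d ∧ Relation.ReflTransGen Par c d := by
    intro a b c hab hac
    obtain ⟨d, h1, h2⟩ := par_diamond hab hac
    exact ⟨d, .single h1, .single h2⟩
  have hE := Relation.equivalence_join_reflTransGen hdiam
  have hJ : Relation.EqvGen (Relation.Join (Relation.ReflTransGen Par)) s t :=
    Relation.EqvGen.mono (p := Relation.Join (Relation.ReflTransGen Par)) (fun a b hab => ⟨b, .single hab, .refl⟩) s t hmono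
  obtain ⟨d, h1, h2⟩ := hE.eqvGen_iff.mp hJ
  refine ⟨d, ?_, ?_⟩ <;>
    [exact Relation.ReflTransGen.trans_induction_on h1 (fun _ => .refl) (fun h => h.red)
      (fun _ _ a b => a.trans b);
     exact Relation.ReflTransGen.trans_induction_on h2 (fun _ => .refl) (fun h => h.red)
      (fun _ _ a b => a.trans b)]


theorem no_step_var {n : Nat} {t : Lam} (h : Step (var n) t) : False := by cases h

theorem no_step_omega {t : Lam} (h : Step K_omega t) : False := by
  cases h with
  | lam h =>
    cases h with
    | appL _ h => exact no_step_var h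
    | appR _ h =>
        cases h with
        | appL _ h => exact no_step_var h
        | appR _ h => exact no_step_var h

theorem no_step_eta {t : Lam} (h : Step K_eta t) : False := by
  cases h with
  | lam h =>
    cases h with
    | lam h =>
      cases h with
      | appL _ h => exact no_step_var h
      | appR _ h =>
          cases h with
          | appL _ h =>
              cases h with
              | appL _ h => exact no_step_var h
              | appR _ h => exact no_step_var h
          | appR _ h => exact no_step_var h

/-- reducts of the body of Y0 -/
inductive InP : Lam → Prop
  | base : InP (app K_omega K_omega)
  | cons {p : Lam} : InP p → InP (app (var 0) p)

theorem InP.step {p q : Lam} (h : InP p) : Step p q → InP q := by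
  induction h generalizing q with
  | base =>
      intro hs
      cases hs with
      | beta t u =>
          have : subst 0 K_omega (app (var 1) (app (var 0) (var 0)))
              = app (var 0) (app K_omega K_omega) := by simp [subst, K_omega, lift]
          rw [this]
          exact InP.cons InP.base
      | appL _ h => exact absurd h (fun h => no_step_omega h)
      | appR _ h => exact absurd h (fun h => no_step_omega h)
  | cons _ ih =>
      intro hs
      cases hs with
      | appL _ h => exact absurd h (fun h => no_step_var h)
      | appR _ h => exact InP.cons (ih h)

inductive Tag : Type | u | v | w

/-- reducts of Y1 (tag u), and of auxiliary subterms with one free variable -/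
inductive InY1 : Tag → Lam → Prop
  | base : InY1 .u (app K_eta K_eta)
  | ulam {b : Lam} : InY1 .v b → InY1 .u (lam b)
  | vmk {c : Lam} : InY1 .w c → InY1 .v (app (var 0) c)
  | wapp {t : Lam} : InY1 .u t → InY1 .w (app t (var 0))
  | wofv {t : Lam} : InY1 .v t → InY1 .w t

def bounded : Nat → Lam → Prop
  | d, .var n => n < d
  | d, .app s t => bounded d s ∧ bounded d t
  | d, .lam t => bounded (d + 1) t

theorem bounded_mono {t : Lam} : ∀ {d e : Nat}, d ≤ e → bounded d t → bounded e t := by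
  induction t with
  | var n => intro d e h hb; simp only [bounded] at *; omega
  | app s t ihs iht =>
      intro d e h hb
      simp only [bounded] at *
      exact ⟨ihs h hb.1, iht h hb.2⟩
  | lam t ih =>
      intro d e h hb
      simp only [bounded] at *
      exact ih (by omega) hb

theorem bounded_subst_var : ∀ {t : Lam} {k : Nat}, bounded (k + 1) t → subst k (var k) t = t := by
  intro t
  induction t with
  | var n => intro k hb; simp only [bounded] at hb; simp only [subst]; split_ifs <;> first | rfl | omega | (congr 1; omega)
  | app s t ihs iht => intro k hb; simp [subst, ihs hb.1, iht hb.2]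
  | lam t ih =>
      intro k hb
      simp only [bounded] at hb
      simp only [subst, lift, if_neg (Nat.not_lt_zero k)]
      rw [ih hb]

theorem InY1.bounded_one {g : Tag} {t : Lam} (h : InY1 g t) : bounded 1 t := by
  induction h with
  | base => simp [bounded, K_eta]
  | ulam _ ih => exact bounded_mono (by omega) ih
  | vmk _ ih => exact ⟨by simp [bounded], ih⟩
  | wapp _ ih => exact ⟨ih, by simp [bounded]⟩
  | wofv _ ih => exact ih

theorem InY1.step {g : Tag} {s q : Lam} (h : InY1 g s) : Step s q → InY1 g q := by
  induction h generalizing q with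
  | base =>
      intro hs
      cases hs with
      | beta t u =>
          have : subst 0 K_eta (lam (app (var 0) (app (app (var 1) (var 1)) (var 0))))
              = lam (app (var 0) (app (app K_eta K_eta) (var 0))) := by
            simp [subst, K_eta, lift]
          rw [this]
          exact InY1.ulam (InY1.vmk (InY1.wapp InY1.base))
      | appL _ h => exact absurd h (fun h => no_step_eta h)
      | appR _ h => exact absurd h (fun h => no_step_eta h)
  | ulam _ ih =>
      intro hs
      cases hs with
      | lam h => exact InY1.ulam (ih h)
  | vmk _ ih =>
      intro hs
      cases hs with
      | appL _ h => exact absurd h (fun h => no_step_var h)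
      | appR _ h => exact InY1.vmk (ih h)
  | wapp hu ih =>
      intro hs
      cases hs with
      | beta t u =>
          cases hu with
          | ulam hv =>
              rw [bounded_subst_var hv.bounded_one]
              exact InY1.wofv hv
      | appL _ h => exact InY1.wapp (ih h)
      | appR _ h => exact absurd h (fun h => no_step_var h)
  | wofv _ ih => intro hs; exact InY1.wofv (ih hs)

theorem InY1_not_InP {g : Tag} {t : Lam} (h : InY1 g t) :
    ((g = Tag.v ∨ g = Tag.w) → InP t → False) ∧
    (g = Tag.u → ∀ p, t = lam p → InP p → False) := by
  induction h with
  | base =>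
      refine ⟨fun hg _ => by cases hg <;> simp_all, fun _ p hp _ => by simp [K_eta] at hp⟩
  | ulam hv ih =>
      refine ⟨fun hg _ => by cases hg <;> simp_all, fun _ p hp hip => ?_⟩
      cases hp
      exact ih.1 (Or.inl rfl) hip
  | vmk hw ih =>
      refine ⟨fun _ hip => ?_, fun hg => by simp_all⟩
      cases hip with
      | cons hp => exact ih.1 (Or.inr rfl) hp
  | wapp hu ih =>
      refine ⟨fun _ hip => ?_, fun hg => by simp_all⟩
      cases hip with
      | cons hp => cases hu
  | wofv hv ih =>
      exact ⟨fun _ hip => ih.1 (Or.inl rfl) hip, fun hg => by simp_all⟩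

theorem red_Y0 {d : Lam} (h : Red Y0 d) : ∃ p, InP p ∧ d = lam p := by
  induction h with
  | refl => exact ⟨app K_omega K_omega, InP.base, rfl⟩
  | tail _ hstep ih =>
      obtain ⟨p, hp, rfl⟩ := ih
      cases hstep with
      | lam h => exact ⟨_, hp.step h, rfl⟩

theorem red_Y1 {d : Lam} (h : Red Y1 d) : InY1 .u d := by
  induction h with
  | refl => exact InY1.base
  | tail _ hstep ih => exact ih.step hstep

theorem Y0_not_conv_Y1 : ¬ Conv Y0 Y1 := by
  intro h
  obtain ⟨d, h0, h1⟩ := conv_join h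
  obtain ⟨p, hp, rfl⟩ := red_Y0 h0
  exact (InY1_not_InP (red_Y1 h1)).2 rfl p rfl hp

end Lam
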